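/- Let ℓ be a prime number, let n ≥ 1 be an integer, and let V be a 2n-dimensional vector space over F_ℓ = ℤ/ℓℤ with basis v_1, …, v_{2n}. Let S ⊆ Λ^n V be the span of ω = v_1 ∧ ⋯ ∧ v_n + v_{n+1} ∧ ⋯ ∧ v_{2n}, and let S^⊥ ⊆ Λ^n(V^∨) be the annihilator of S under the canonical pairing between Λ^n(V^∨) and Λ^n V. Then S^⊥ admits a basis all of whose elements are decomposable, i.e., a basis each of whose members has the form w_1 ∧ ⋯ ∧ w_n for some w_1, …, w_n ∈ V^∨. -/
import Mathlib

set_option maxHeartbeats 1000000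
set_option synthInstance.maxHeartbeats 400000

/-- The wedge `f 0 ∧ ⋯ ∧ f (n-1)`, as an element of the `n`-th exterior power
`⋀[R]^n M ⊆ ExteriorAlgebra R M`. -/
noncomputable def wedge {R : Type*} [CommRing R] {M : Type*} [AddCommGroup M] [Module R M]
    (n : ℕ) (f : Fin n → M) : ↥(⋀[R]^n M) :=
  ⟨ExteriorAlgebra.ιMulti R n f, ExteriorAlgebra.ιMulti_range R n (Set.mem_range_self f)⟩

section Aux

variable (ℓ n : ℕ)

private noncomputable def dV (j : Fin (2 * n)) :
    Module.Dual (ZMod ℓ) (Fin (2 * n) → ZMod ℓ) := LinearMap.proj j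

private noncomputable def eV (j : Fin (2 * n)) : Fin (2 * n) → ZMod ℓ := Pi.single j 1

private noncomputable def FD (g : Fin n → Fin (2 * n)) :
    ↥(⋀[ZMod ℓ]^n (Module.Dual (ZMod ℓ) (Fin (2 * n) → ZMod ℓ))) :=
  wedge n (fun i => dV ℓ n (g i))

private noncomputable def EV (t : Fin n → Fin (2 * n)) :
    ↥(⋀[ZMod ℓ]^n (Fin (2 * n) → ZMod ℓ)) :=
  wedge n (fun i => eV ℓ n (t i))

private def lowF : Fin n → Fin (2 * n) := fun i => ⟨i.1, by have := i.isLt; omega⟩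
private def highF : Fin n → Fin (2 * n) := fun i => ⟨n + i.1, by have := i.isLt; omega⟩

private noncomputable def cw : Fin n → ZMod ℓ := fun i => if i.1 = 0 then (-1) ^ n else -1

private noncomputable def fphi : Fin n → Module.Dual (ZMod ℓ) (Fin (2 * n) → ZMod ℓ) :=
  fun i => dV ℓ n (lowF n i) + cw ℓ n i • dV ℓ n (highF n i)

private def grF (r : Fin n → Bool) : Fin n → Fin (2 * n) :=
  fun i => if r i then lowF n i else highF n i

private noncomputable def qc (r : Fin n → Bool) : ZMod ℓ :=
  ∏ i, if r i then (1 : ZMod ℓ) else cw ℓ n i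

variable
  (B : ↥(⋀[ZMod ℓ]^n (Module.Dual (ZMod ℓ) (Fin (2 * n) → ZMod ℓ)))
      →ₗ[ZMod ℓ] ↥(⋀[ZMod ℓ]^n (Fin (2 * n) → ZMod ℓ)) →ₗ[ZMod ℓ] ZMod ℓ)

private lemma pair_formula
    (hB : ∀ (f : Fin n → Module.Dual (ZMod ℓ) (Fin (2 * n) → ZMod ℓ))
        (x : Fin n → (Fin (2 * n) → ZMod ℓ)),
        B (wedge n f) (wedge n x)
          = ∑ σ : Equiv.Perm (Fin n),
              ((Equiv.Perm.sign σ : ℤ) : ZMod ℓ) * ∏ i : Fin n, f i (x (σ i)))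
    (g t : Fin n → Fin (2 * n)) :
    B (FD ℓ n g) (EV ℓ n t)
      = ∑ σ : Equiv.Perm (Fin n),
          ((Equiv.Perm.sign σ : ℤ) : ZMod ℓ) * (if ∀ i, g i = t (σ i) then 1 else 0) := by
  classical
  rw [show FD ℓ n g = wedge n (fun i => dV ℓ n (g i)) from rfl,
      show EV ℓ n t = wedge n (fun i => eV ℓ n (t i)) from rfl, hB]
  refine Finset.sum_congr rfl fun σ _ => ?_
  congr 1
  have h : ∀ i : Fin n, dV ℓ n (g i) (eV ℓ n (t (σ i)))
      = if g i = t (σ i) then (1 : ZMod ℓ) else 0 := by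
    intro i
    simp [dV, eV, Pi.single_apply]
  rw [Finset.prod_congr rfl (fun i _ => h i), Finset.prod_boole]
  simp

private lemma pair_zero
    (hB : ∀ (f : Fin n → Module.Dual (ZMod ℓ) (Fin (2 * n) → ZMod ℓ))
        (x : Fin n → (Fin (2 * n) → ZMod ℓ)),
        B (wedge n f) (wedge n x)
          = ∑ σ : Equiv.Perm (Fin n),
              ((Equiv.Perm.sign σ : ℤ) : ZMod ℓ) * ∏ i : Fin n, f i (x (σ i)))
    (g t : Fin n → Fin (2 * n)) (h : ¬ ∃ σ : Equiv.Perm (Fin n), g = t ∘ σ) :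
    B (FD ℓ n g) (EV ℓ n t) = 0 := by
  classical
  rw [pair_formula ℓ n B hB g t]
  refine Finset.sum_eq_zero fun σ _ => ?_
  rw [if_neg, mul_zero]
  exact fun hall => h ⟨σ, funext hall⟩

private lemma pair_eq
    (hB : ∀ (f : Fin n → Module.Dual (ZMod ℓ) (Fin (2 * n) → ZMod ℓ))
        (x : Fin n → (Fin (2 * n) → ZMod ℓ)),
        B (wedge n f) (wedge n x)
          = ∑ σ : Equiv.Perm (Fin n),
              ((Equiv.Perm.sign σ : ℤ) : ZMod ℓ) * ∏ i : Fin n, f i (x (σ i)))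
    (t : Fin n → Fin (2 * n)) (ht : Function.Injective t) (σ : Equiv.Perm (Fin n)) :
    B (FD ℓ n (t ∘ σ)) (EV ℓ n t) = ((Equiv.Perm.sign σ : ℤ) : ZMod ℓ) := by
  classical
  rw [pair_formula ℓ n B hB]
  have key : ∀ σ' : Equiv.Perm (Fin n), (∀ i, (t ∘ σ) i = t (σ' i)) ↔ σ' = σ := by
    intro σ'
    constructor
    · intro h
      exact Equiv.ext fun i => (ht (h i)).symm
    · rintro rfl i
      rfl
  calc (∑ σ' : Equiv.Perm (Fin n),
          ((Equiv.Perm.sign σ' : ℤ) : ZMod ℓ) * (if ∀ i, (t ∘ σ) i = t (σ' i) then 1 else 0))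
      = ∑ σ' : Equiv.Perm (Fin n),
          (if σ' = σ then ((Equiv.Perm.sign σ' : ℤ) : ZMod ℓ) else 0) := by
        refine Finset.sum_congr rfl fun σ' _ => ?_
        by_cases hc : σ' = σ
        · subst hc
          simp
        · rw [if_neg (fun hall => hc ((key σ').1 hall)), if_neg hc, mul_zero]
    _ = ((Equiv.Perm.sign σ : ℤ) : ZMod ℓ) := by
        rw [Finset.sum_ite_eq' Finset.univ σ]
        simp

private lemma FD_perm (g : Fin n → Fin (2 * n)) (σ : Equiv.Perm (Fin n)) :
    FD ℓ n (g ∘ σ) = ((Equiv.Perm.sign σ : ℤ) : ZMod ℓ) • FD ℓ n g := by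
  classical
  apply Subtype.coe_injective
  simp only [SetLike.val_smul]
  have h2 := AlternatingMap.map_perm (ExteriorAlgebra.ιMulti (ZMod ℓ) n)
    (fun i => dV ℓ n (g i)) σ
  refine Eq.trans ?_ (h2.trans ?_)
  · rfl
  · rw [Units.smul_def, Int.cast_smul_eq_zsmul]; rfl

private lemma wedge_eq_sum_FD (f : Fin n → Module.Dual (ZMod ℓ) (Fin (2 * n) → ZMod ℓ)) :
    wedge n f = ∑ g : Fin n → Fin (2 * n), (∏ i, f i (eV ℓ n (g i))) • FD ℓ n g := by
  classical
  have hf : ∀ i : Fin n, f i = ∑ j : Fin (2 * n), (f i (eV ℓ n j)) • dV ℓ n j := by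
    intro i
    refine LinearMap.ext fun x => ?_
    have hx : x = ∑ j : Fin (2 * n), x j • eV ℓ n j := by
      ext j'
      simp [eV, Pi.single_apply]
    rw [LinearMap.sum_apply]
    conv_lhs => rw [hx, map_sum]
    refine Finset.sum_congr rfl fun j _ => ?_
    simp [dV, smul_eq_mul, mul_comm]
  have hexp : ExteriorAlgebra.ιMulti (ZMod ℓ) n f
      = ∑ g : Fin n → Fin (2 * n), (∏ i, f i (eV ℓ n (g i))) •
          ExteriorAlgebra.ιMulti (ZMod ℓ) n (fun i => dV ℓ n (g i)) := by
    have h1 : ExteriorAlgebra.ιMulti (ZMod ℓ) n f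
        = ExteriorAlgebra.ιMulti (ZMod ℓ) n
            (fun i => ∑ j : Fin (2 * n), (f i (eV ℓ n j)) • dV ℓ n j) := by
      exact congrArg _ (funext hf)
    rw [h1]
    rw [show (ExteriorAlgebra.ιMulti (ZMod ℓ) n
        (fun i => ∑ j : Fin (2 * n), (f i (eV ℓ n j)) • dV ℓ n j))
      = (ExteriorAlgebra.ιMulti (ZMod ℓ) n).toMultilinearMap
        (fun i => ∑ j : Fin (2 * n), (fun (i : Fin n) (j : Fin (2 * n)) =>
            (f i (eV ℓ n j)) • dV ℓ n j) i j) from rfl]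
    rw [MultilinearMap.map_sum]
    refine Finset.sum_congr rfl fun g _ => ?_
    exact (ExteriorAlgebra.ιMulti (ZMod ℓ) n).toMultilinearMap.map_smul_univ _ _
  apply Subtype.coe_injective
  simp only [AddSubmonoidClass.coe_finset_sum, SetLike.val_smul]
  exact hexp

private lemma mem_span_FD (ψ : ↥(⋀[ZMod ℓ]^n (Module.Dual (ZMod ℓ) (Fin (2 * n) → ZMod ℓ)))) :
    ψ ∈ Submodule.span (ZMod ℓ) (Set.range (FD ℓ n)) := by
  classical
  have h0 : ∀ f : Fin n → Module.Dual (ZMod ℓ) (Fin (2 * n) → ZMod ℓ),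
      wedge n f ∈ Submodule.span (ZMod ℓ) (Set.range (FD ℓ n)) := by
    intro f
    rw [wedge_eq_sum_FD]
    exact Submodule.sum_mem _ fun g _ =>
      Submodule.smul_mem _ _ (Submodule.subset_span (Set.mem_range_self g))
  have h1 : Submodule.span (ZMod ℓ)
      (Set.range (wedge (R := ZMod ℓ)
        (M := Module.Dual (ZMod ℓ) (Fin (2 * n) → ZMod ℓ)) n)) = ⊤ := by
    apply Submodule.map_injective_of_injective
      (Submodule.injective_subtype (⋀[ZMod ℓ]^n (Module.Dual (ZMod ℓ) (Fin (2 * n) → ZMod ℓ))))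
    rw [Submodule.map_span, Submodule.map_top, Submodule.range_subtype]
    have himg : (⋀[ZMod ℓ]^n (Module.Dual (ZMod ℓ) (Fin (2 * n) → ZMod ℓ))).subtype ''
        Set.range (wedge (R := ZMod ℓ)
          (M := Module.Dual (ZMod ℓ) (Fin (2 * n) → ZMod ℓ)) n)
        = Set.range (ExteriorAlgebra.ιMulti (ZMod ℓ) n
            (M := Module.Dual (ZMod ℓ) (Fin (2 * n) → ZMod ℓ))) := by
      ext x
      constructor
      · rintro ⟨y, ⟨f, rfl⟩, rfl⟩
        exact ⟨f, rfl⟩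
      · rintro ⟨f, rfl⟩
        exact ⟨wedge n f, ⟨f, rfl⟩, rfl⟩
    rw [himg, ExteriorAlgebra.ιMulti_span_fixedDegree]
  have h2 : ψ ∈ Submodule.span (ZMod ℓ)
      (Set.range (wedge (R := ZMod ℓ)
        (M := Module.Dual (ZMod ℓ) (Fin (2 * n) → ZMod ℓ)) n)) := by
    rw [h1]; trivial
  exact Submodule.span_le.mpr (Set.range_subset_iff.mpr h0) h2

private lemma phi_expand :
    wedge n (fphi ℓ n) = ∑ r : Fin n → Bool, qc ℓ n r • FD ℓ n (grF n r) := by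
  classical
  have hstep : ExteriorAlgebra.ιMulti (ZMod ℓ) n (fphi ℓ n)
      = ∑ r : Fin n → Bool, ExteriorAlgebra.ιMulti (ZMod ℓ) n
          (fun i => if r i then dV ℓ n (lowF n i) else cw ℓ n i • dV ℓ n (highF n i)) := by
    have h1 : fphi ℓ n = fun i => ∑ b : Bool,
        (fun (i : Fin n) (b : Bool) =>
          if b then dV ℓ n (lowF n i) else cw ℓ n i • dV ℓ n (highF n i)) i b := by
      funext i
      rw [Fintype.sum_bool]
      simp [fphi, add_comm]
    rw [show ExteriorAlgebra.ιMulti (ZMod ℓ) n (fphi ℓ n)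
        = (ExteriorAlgebra.ιMulti (ZMod ℓ) n).toMultilinearMap (fphi ℓ n) from rfl, h1,
      MultilinearMap.map_sum]
    rfl
  have hterm : ∀ r : Fin n → Bool,
      ExteriorAlgebra.ιMulti (ZMod ℓ) n
          (fun i => if r i then dV ℓ n (lowF n i) else cw ℓ n i • dV ℓ n (highF n i))
        = qc ℓ n r • ExteriorAlgebra.ιMulti (ZMod ℓ) n (fun i => dV ℓ n (grF n r i)) := by
    intro r
    have h2 : (fun i => if r i then dV ℓ n (lowF n i) else cw ℓ n i • dV ℓ n (highF n i))
        = fun i => (if r i then (1 : ZMod ℓ) else cw ℓ n i) • dV ℓ n (grF n r i) := by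
      funext i
      by_cases hri : r i <;> simp [grF, hri]
    rw [h2]
    exact (ExteriorAlgebra.ιMulti (ZMod ℓ) n).toMultilinearMap.map_smul_univ _ _
  apply Subtype.coe_injective
  simp only [AddSubmonoidClass.coe_finset_sum, SetLike.val_smul]
  exact hstep.trans (Finset.sum_congr rfl fun r _ => hterm r)

private lemma grF_true : grF n (fun _ => true) = lowF n := by
  funext i; simp [grF]

private lemma grF_false : grF n (fun _ => false) = highF n := by
  funext i; simp [grF]

private lemma qc_true : qc ℓ n (fun _ => true) = 1 := by
  simp [qc]

private lemma qc_false (hn : 1 ≤ n) : qc ℓ n (fun _ => false) = -1 := by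
  classical
  have h1 : qc ℓ n (fun _ => false) = ∏ i : Fin n, cw ℓ n i := by
    simp [qc]
  rw [h1, ← Finset.mul_prod_erase Finset.univ _ (Finset.mem_univ (⟨0, hn⟩ : Fin n))]
  have h2 : ∀ i ∈ Finset.univ.erase (⟨0, hn⟩ : Fin n), cw ℓ n i = -1 := by
    intro i hi
    rw [Finset.mem_erase] at hi
    have : i.1 ≠ 0 := fun h => hi.1 (Fin.ext h)
    simp [cw, this]
  rw [Finset.prod_congr rfl h2, Finset.prod_const, Finset.card_erase_of_mem (Finset.mem_univ _),
    Finset.card_univ, Fintype.card_fin]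
  have h3 : cw ℓ n (⟨0, hn⟩ : Fin n) = (-1) ^ n := by simp [cw]
  rw [h3, ← pow_add]
  exact Odd.neg_one_pow ⟨n - 1, by omega⟩

end Aux

/-- Let `ℓ` be a prime, `n ≥ 1`, and let `V = (ZMod ℓ)^(2n)` with standard basis
`e i = Pi.single i 1`.  Let `B` be the canonical pairing `Λⁿ(V^∨) × Λⁿ V → ZMod ℓ`,
determined by `⟨f₁ ∧ ⋯ ∧ fₙ, x₁ ∧ ⋯ ∧ xₙ⟩ = ∑_{σ} sgn(σ) f₁(x_{σ(1)}) ⋯ fₙ(x_{σ(n)})`.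
Let `S ⊆ Λⁿ V` be the span of `ω = e 0 ∧ ⋯ ∧ e (n-1) + e n ∧ ⋯ ∧ e (2n-1)`.  Then the
annihilator `S^⊥ ⊆ Λⁿ(V^∨)` admits a basis consisting of decomposable elements, i.e. a
linearly independent family spanning `S^⊥` each of whose members has the form
`w₁ ∧ ⋯ ∧ wₙ` with `w₁, …, wₙ ∈ V^∨`. -/
theorem annihilator_has_decomposable_basis (ℓ : ℕ) (hℓ : ℓ.Prime) (n : ℕ) (hn : 1 ≤ n)
    (B : ↥(⋀[ZMod ℓ]^n (Module.Dual (ZMod ℓ) (Fin (2 * n) → ZMod ℓ)))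
        →ₗ[ZMod ℓ] ↥(⋀[ZMod ℓ]^n (Fin (2 * n) → ZMod ℓ)) →ₗ[ZMod ℓ] ZMod ℓ)
    (hB : ∀ (f : Fin n → Module.Dual (ZMod ℓ) (Fin (2 * n) → ZMod ℓ))
        (x : Fin n → (Fin (2 * n) → ZMod ℓ)),
        B (wedge n f) (wedge n x)
          = ∑ σ : Equiv.Perm (Fin n),
              ((Equiv.Perm.sign σ : ℤ) : ZMod ℓ) * ∏ i : Fin n, f i (x (σ i))) :
    ∀ ω : ↥(⋀[ZMod ℓ]^n (Fin (2 * n) → ZMod ℓ)),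
    ω = wedge n (fun i : Fin n => Pi.single (⟨(i : ℕ), by omega⟩ : Fin (2 * n)) 1) +
        wedge n (fun i : Fin n => Pi.single (⟨n + (i : ℕ), by omega⟩ : Fin (2 * n)) 1) →
    ∃ (m : ℕ) (b : Fin m → ↥(⋀[ZMod ℓ]^n (Module.Dual (ZMod ℓ) (Fin (2 * n) → ZMod ℓ)))),
      (∀ i : Fin m, ∃ w : Fin n → Module.Dual (ZMod ℓ) (Fin (2 * n) → ZMod ℓ),
        b i = wedge n w) ∧
      LinearIndependent (ZMod ℓ) b ∧
      ↑(Submodule.span (ZMod ℓ) (Set.range b))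
        = {φ : ↥(⋀[ZMod ℓ]^n (Module.Dual (ZMod ℓ) (Fin (2 * n) → ZMod ℓ))) |
            ∀ s ∈ Submodule.span (ZMod ℓ) ({ω} : Set _), B φ s = 0} := by
  classical
  haveI : Fact ℓ.Prime := ⟨hℓ⟩
  intro ω hω
  have hωE : ω = EV ℓ n (lowF n) + EV ℓ n (highF n) := hω
  -- injectivity of the two index embeddings
  have hlowinj : Function.Injective (lowF n) := by
    intro a b h
    have := congrArg Fin.val h
    simp only [lowF] at this
    exact Fin.ext this
  have hhighinj : Function.Injective (highF n) := by
    intro a b h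
    have := congrArg Fin.val h
    simp only [highF] at this
    exact Fin.ext (by omega)
  -- no function with a high value is a permuted low family, and vice versa
  have hnotlow : ∀ g : Fin n → Fin (2 * n), (∃ i, n ≤ (g i).1) →
      ¬ ∃ σ : Equiv.Perm (Fin n), g = lowF n ∘ σ := by
    rintro g ⟨i, hi⟩ ⟨σ, rfl⟩
    have : ((lowF n ∘ σ) i).1 = (σ i).1 := rfl
    have h2 := (σ i).isLt
    omega
  have hnothigh : ∀ g : Fin n → Fin (2 * n), (∃ i, (g i).1 < n) →
      ¬ ∃ σ : Equiv.Perm (Fin n), g = highF n ∘ σ := by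
    rintro g ⟨i, hi⟩ ⟨σ, rfl⟩
    have : ((highF n ∘ σ) i).1 = n + (σ i).1 := rfl
    omega
  have hlowlt : ∀ i : Fin n, (lowF n i).1 < n := fun i => i.isLt
  have hhighge : ∀ i : Fin n, n ≤ (highF n i).1 := fun i => Nat.le_add_right n i.1
  -- evaluation of B (FD g) ω
  have haval : ∀ g : Fin n → Fin (2 * n), B (FD ℓ n g) ω
      = B (FD ℓ n g) (EV ℓ n (lowF n)) + B (FD ℓ n g) (EV ℓ n (highF n)) := by
    intro g
    rw [hωE, map_add]
  have hlowself : ∀ σ : Equiv.Perm (Fin n),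
      B (FD ℓ n (lowF n ∘ σ)) ω = ((Equiv.Perm.sign σ : ℤ) : ZMod ℓ) := by
    intro σ
    rw [haval, pair_eq ℓ n B hB (lowF n) hlowinj σ,
      pair_zero ℓ n B hB (lowF n ∘ σ) (highF n)
        (hnothigh _ ⟨⟨0, hn⟩, (σ ⟨0, hn⟩).isLt⟩), add_zero]
  have hhighself : ∀ σ : Equiv.Perm (Fin n),
      B (FD ℓ n (highF n ∘ σ)) ω = ((Equiv.Perm.sign σ : ℤ) : ZMod ℓ) := by
    intro σ
    rw [haval, pair_eq ℓ n B hB (highF n) hhighinj σ,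
      pair_zero ℓ n B hB (highF n ∘ σ) (lowF n)
        (hnotlow _ ⟨⟨0, hn⟩, Nat.le_add_right n _⟩), zero_add]
  have hcomp1 : ∀ t : Fin n → Fin (2 * n), t ∘ ⇑(1 : Equiv.Perm (Fin n)) = t := fun t => rfl
  have halow : B (FD ℓ n (lowF n)) ω = 1 := by
    have := hlowself 1
    rw [hcomp1] at this
    simpa using this
  have hahigh : B (FD ℓ n (highF n)) ω = 1 := by
    have := hhighself 1
    rw [hcomp1] at this
    simpa using this
  -- the set of decomposable elements of the annihilator
  set T : Set (↥(⋀[ZMod ℓ]^n (Module.Dual (ZMod ℓ) (Fin (2 * n) → ZMod ℓ)))) :=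
    {ψ | (∃ w, ψ = wedge n w) ∧ B ψ ω = 0} with hTdef
  have hTmem : ∀ g : Fin n → Fin (2 * n), (¬ ∃ σ : Equiv.Perm (Fin n), g = lowF n ∘ σ) →
      (¬ ∃ σ : Equiv.Perm (Fin n), g = highF n ∘ σ) →
      B (FD ℓ n g) ω = 0 ∧ FD ℓ n g ∈ T := by
    intro g h1 h2
    have h0 : B (FD ℓ n g) ω = 0 := by
      rw [haval, pair_zero ℓ n B hB g _ h1, pair_zero ℓ n B hB g _ h2, add_zero]
    exact ⟨h0, ⟨⟨fun i => dV ℓ n (g i), rfl⟩, h0⟩⟩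
  -- mixed Boolean vectors give elements of T
  have hmixr : ∀ r : Fin n → Bool, r ≠ (fun _ => true) → r ≠ (fun _ => false) →
      B (FD ℓ n (grF n r)) ω = 0 ∧ FD ℓ n (grF n r) ∈ T := by
    intro r h1 h2
    obtain ⟨i, hi⟩ : ∃ i, r i = false := by
      by_contra h
      push_neg at h
      exact h1 (funext fun i => by simpa using h i)
    obtain ⟨j, hj⟩ : ∃ j, r j = true := by
      by_contra h
      push_neg at h
      exact h2 (funext fun j => by simpa using h j)
    apply hTmem
    · refine hnotlow _ ⟨i, ?_⟩
      simp only [grF, hi, Bool.false_eq_true, if_false]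
      exact hhighge i
    · refine hnothigh _ ⟨j, ?_⟩
      simp only [grF, hj, if_true]
      exact hlowlt j
  have htf : (fun _ : Fin n => true) ≠ (fun _ => false) := by
    intro h
    have := congrFun h ⟨0, hn⟩
    simp at this
  -- B φ ω = 0 where φ = wedge (fphi)
  have hφ0 : B (wedge n (fphi ℓ n)) ω = 0 := by
    rw [phi_expand]
    rw [map_sum, LinearMap.sum_apply]
    have hterm : ∀ r : Fin n → Bool,
        B (qc ℓ n r • FD ℓ n (grF n r)) ω
          = (if r = (fun _ => true) then (1 : ZMod ℓ) else 0)
            + (if r = (fun _ => false) then -1 else 0) := by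
      intro r
      rw [map_smul, LinearMap.smul_apply, smul_eq_mul]
      by_cases h1 : r = fun _ => true
      · subst h1
        rw [grF_true, qc_true, one_mul, halow, if_pos rfl, if_neg htf, add_zero]
      · by_cases h2 : r = fun _ => false
        · subst h2
          rw [grF_false, qc_false ℓ n hn, hahigh, if_neg (fun h => htf h.symm), if_pos rfl]
          ring
        · rw [(hmixr r h1 h2).1, mul_zero, if_neg h1, if_neg h2, add_zero]
    rw [Finset.sum_congr rfl fun r _ => hterm r, Finset.sum_add_distrib]
    rw [Finset.sum_ite_eq' Finset.univ, Finset.sum_ite_eq' Finset.univ]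
    simp
  have hφT : wedge n (fphi ℓ n) ∈ T := ⟨⟨fphi ℓ n, rfl⟩, hφ0⟩
  -- FD low - FD high lies in span T
  have hdiff : FD ℓ n (lowF n) - FD ℓ n (highF n) ∈ Submodule.span (ZMod ℓ) T := by
    have hmemf : (fun _ : Fin n => false) ∈ Finset.univ.erase (fun _ : Fin n => true) :=
      Finset.mem_erase.2 ⟨fun h => htf h.symm, Finset.mem_univ _⟩
    have hsplit : ∑ r : Fin n → Bool, qc ℓ n r • FD ℓ n (grF n r)
        = qc ℓ n (fun _ => true) • FD ℓ n (grF n (fun _ => true))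
          + (qc ℓ n (fun _ => false) • FD ℓ n (grF n (fun _ => false))
            + ∑ r ∈ (Finset.univ.erase (fun _ => true)).erase (fun _ => false),
                qc ℓ n r • FD ℓ n (grF n r)) := by
      rw [← Finset.add_sum_erase Finset.univ (fun r => qc ℓ n r • FD ℓ n (grF n r))
          (Finset.mem_univ (fun _ => true)),
        ← Finset.add_sum_erase _ (fun r => qc ℓ n r • FD ℓ n (grF n r)) hmemf]
    have hrest : ∑ r ∈ (Finset.univ.erase (fun _ => true)).erase (fun _ => false),
        qc ℓ n r • FD ℓ n (grF n r) ∈ Submodule.span (ZMod ℓ) T := by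
      refine Submodule.sum_mem _ fun r hr => ?_
      rw [Finset.mem_erase, Finset.mem_erase] at hr
      exact Submodule.smul_mem _ _ (Submodule.subset_span (hmixr r hr.2.1 hr.1).2)
    have h5 : FD ℓ n (lowF n) - FD ℓ n (highF n)
        = wedge n (fphi ℓ n)
          - ∑ r ∈ (Finset.univ.erase (fun _ => true)).erase (fun _ => false),
              qc ℓ n r • FD ℓ n (grF n r) := by
      rw [phi_expand, hsplit, grF_true, grF_false, qc_true, qc_false ℓ n hn]
      module
    rw [h5]
    exact Submodule.sub_mem _ (Submodule.subset_span hφT) hrest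
  -- the key reduction
  have hkey : ∀ g : Fin n → Fin (2 * n),
      FD ℓ n g - (B (FD ℓ n g) ω) • FD ℓ n (lowF n) ∈ Submodule.span (ZMod ℓ) T := by
    intro g
    by_cases h1 : ∃ σ : Equiv.Perm (Fin n), g = lowF n ∘ σ
    · obtain ⟨σ, rfl⟩ := h1
      rw [hlowself σ, FD_perm, sub_self]
      exact Submodule.zero_mem _
    · by_cases h2 : ∃ σ : Equiv.Perm (Fin n), g = highF n ∘ σ
      · obtain ⟨σ, rfl⟩ := h2
        rw [hhighself σ, FD_perm]
        have h3 : ((Equiv.Perm.sign σ : ℤ) : ZMod ℓ) • FD ℓ n (highF n)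
            - ((Equiv.Perm.sign σ : ℤ) : ZMod ℓ) • FD ℓ n (lowF n)
            = (-((Equiv.Perm.sign σ : ℤ) : ZMod ℓ))
              • (FD ℓ n (lowF n) - FD ℓ n (highF n)) := by
          module
        rw [h3]
        exact Submodule.smul_mem _ _ hdiff
      · have h0 := hTmem g h1 h2
        rw [h0.1, zero_smul, sub_zero]
        exact Submodule.subset_span h0.2
  -- every element of the annihilator is in span T
  have hspanT : ∀ ψ, B ψ ω = 0 → ψ ∈ Submodule.span (ZMod ℓ) T := by
    intro ψ hψ
    obtain ⟨c, hc⟩ := (Submodule.mem_span_range_iff_exists_fun (ZMod ℓ)).1 (mem_span_FD ℓ n ψ)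
    have hsum0 : ∑ g : Fin n → Fin (2 * n), c g * B (FD ℓ n g) ω = 0 := by
      have h6 : B ψ ω = ∑ g : Fin n → Fin (2 * n), c g * B (FD ℓ n g) ω := by
        rw [← hc]
        simp [map_sum, map_smul, LinearMap.sum_apply, LinearMap.smul_apply, smul_eq_mul]
      rw [← h6, hψ]
    have hψeq : ψ = ∑ g : Fin n → Fin (2 * n),
        c g • (FD ℓ n g - (B (FD ℓ n g) ω) • FD ℓ n (lowF n)) := by
      symm
      simp only [smul_sub, smul_smul, Finset.sum_sub_distrib, ← Finset.sum_smul, hc, hsum0,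
        zero_smul, sub_zero]
    rw [hψeq]
    exact Submodule.sum_mem _ fun g _ => Submodule.smul_mem _ _ (hkey g)
  have hker : ∀ ψ ∈ Submodule.span (ZMod ℓ) T, B ψ ω = 0 := by
    intro ψ hψ
    have hle : Submodule.span (ZMod ℓ) T ≤ LinearMap.ker (B.flip ω) :=
      Submodule.span_le.mpr fun x hx => LinearMap.mem_ker.2 hx.2
    exact hle hψ
  have hsetEq : ((Submodule.span (ZMod ℓ) T :
      Submodule (ZMod ℓ) (↥(⋀[ZMod ℓ]^n (Module.Dual (ZMod ℓ) (Fin (2 * n) → ZMod ℓ))))) : Set _)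
      = {φ : ↥(⋀[ZMod ℓ]^n (Module.Dual (ZMod ℓ) (Fin (2 * n) → ZMod ℓ))) |
          ∀ s ∈ Submodule.span (ZMod ℓ) ({ω} : Set _), B φ s = 0} := by
    ext ψ
    simp only [SetLike.mem_coe, Set.mem_setOf_eq]
    constructor
    · intro hψ s hs
      obtain ⟨a, rfl⟩ := Submodule.mem_span_singleton.1 hs
      rw [map_smul, smul_eq_mul, hker ψ hψ, mul_zero]
    · intro h
      exact hspanT ψ (h ω (Submodule.mem_span_singleton_self ω))
  -- finite dimensionality
  haveI : Module.Finite (ZMod ℓ)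
      (↥(⋀[ZMod ℓ]^n (Module.Dual (ZMod ℓ) (Fin (2 * n) → ZMod ℓ)))) := by
    rw [Module.finite_def, Submodule.fg_def]
    exact ⟨Set.range (FD ℓ n), Set.finite_range _,
      eq_top_iff.2 fun ψ _ => mem_span_FD ℓ n ψ⟩
  -- extract a basis from T
  obtain ⟨bs, hbsT, hbspan, hbli⟩ := exists_linearIndependent (ZMod ℓ) T
  have hfin : bs.Finite := hbli.setFinite
  have hmem : ∀ i : Fin hfin.toFinset.card,
      (hfin.toFinset.equivFin.symm i).1 ∈ bs := fun i =>
    hfin.mem_toFinset.1 (hfin.toFinset.equivFin.symm i).2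
  refine ⟨hfin.toFinset.card,
    fun i => (hfin.toFinset.equivFin.symm i).1, ?_, ?_, ?_⟩
  · intro i
    exact (hbsT (hmem i)).1
  · refine hbli.comp (fun i => ⟨(hfin.toFinset.equivFin.symm i).1, hmem i⟩) ?_
    intro i j h
    have h1 := congrArg (fun x : bs => x.1) h
    exact hfin.toFinset.equivFin.symm.injective (Subtype.ext h1)
  · have hrange : Set.range
        (fun i : Fin hfin.toFinset.card => (hfin.toFinset.equivFin.symm i).1) = bs := by
      ext x
      constructor
      · rintro ⟨i, rfl⟩
        exact hmem i
      · intro hx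
        refine ⟨hfin.toFinset.equivFin ⟨x, hfin.mem_toFinset.2 hx⟩, ?_⟩
        simp
    rw [hrange, hbspan]
    exact hsetEq
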